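/- Let H be a complex Hilbert space, ψ ∈ H a unit vector, and A₀, A₁, B₀, B₁ : H →L[ℂ] H bounded self-adjoint operators satisfying Aᵢ ∘ Aᵢ = 1 and Bⱼ ∘ Bⱼ = 1, with Aᵢ ∘ Bⱼ = Bⱼ ∘ Aᵢ for all i, j ∈ {0,1}. Then the Tsirelson bound holds: |re⟪ψ, (A₀B₀ + A₁B₀ + A₀B₁ − A₁B₁)ψ⟫| ≤ 2√2. -/

import Mathlib

/-- Tsirelson's bound for the quantum Bell-CHSH scenario. -/
theorem tsirelson_bound
    {H : Type*} [NormedAddCommGroup H] [InnerProductSpace ℂ H] [CompleteSpace H]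
    (ψ : H) (hψ : ‖ψ‖ = 1)
    (A₀ A₁ B₀ B₁ : H →L[ℂ] H)
    (hA₀ : IsSelfAdjoint A₀) (hA₁ : IsSelfAdjoint A₁)
    (hB₀ : IsSelfAdjoint B₀) (hB₁ : IsSelfAdjoint B₁)
    (hA₀2 : A₀ * A₀ = 1) (hA₁2 : A₁ * A₁ = 1)
    (hB₀2 : B₀ * B₀ = 1) (hB₁2 : B₁ * B₁ = 1)
    (hcomm : ∀ i ∈ [A₀, A₁], ∀ j ∈ [B₀, B₁], i * j = j * i) :
    |(inner ℂ ψ ((A₀ * B₀ + A₁ * B₀ + A₀ * B₁ - A₁ * B₁) ψ) : ℂ).re| ≤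
      2 * Real.sqrt 2 := by
  have hψ0 : ψ ≠ 0 := by intro h; rw [h, norm_zero] at hψ; norm_num at hψ
  haveI : Nontrivial H := ⟨⟨ψ, 0, hψ0⟩⟩
  set a := A₀; set b := A₁; set c := B₀; set d := B₁
  have hac : a * c = c * a := hcomm a (by simp) c (by simp)
  have had : a * d = d * a := hcomm a (by simp) d (by simp)
  have hbc : b * c = c * b := hcomm b (by simp) c (by simp)
  have hbd : b * d = d * b := hcomm b (by simp) d (by simp)
  set C : H →L[ℂ] H := a * c + b * c + a * d - b * d with hC
  -- norms of a,b,c,d are 1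
  have hn : ∀ x : H →L[ℂ] H, IsSelfAdjoint x → x * x = 1 → ‖x‖ = 1 := by
    intro x hx hx2
    have h1 : ‖x‖ * ‖x‖ = 1 := by
      have := CStarRing.norm_star_mul_self (x := x)
      rw [hx.star_eq, hx2, norm_one] at this
      linarith
    nlinarith [norm_nonneg x]
  have hna := hn a hA₀ hA₀2
  have hnb := hn b hA₁ hA₁2
  have hnc := hn c hB₀ hB₀2
  have hnd := hn d hB₁ hB₁2
  -- helper rewrites
  have sw : ∀ x y z w : H →L[ℂ] H, z * y = y * z →
      (x * y) * (z * w) = (x * z) * (y * w) := by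
    intro x y z w h
    rw [mul_assoc, ← mul_assoc y, ← h, mul_assoc, ← mul_assoc]
  -- key algebraic identity
  have key : C * C = 4 + (a * b - b * a) * (d * c - c * d) := by
    rw [hC]
    simp only [add_mul, mul_add, sub_mul, mul_sub]
    rw [sw a c a c hac,
        sw a c b c hbc,
        sw a c a d hac,
        sw a c b d hbc,
        sw b c a c hac,
        sw b c b c hbc,
        sw b c a d hac,
        sw b c b d hbc,
        sw a d a c had,
        sw a d b c hbd,
        sw a d a d had,
        sw a d b d hbd,
        sw b d a c had,
        sw b d b c hbd,
        sw b d a d had,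
        sw b d b d hbd,
        hA₀2, hA₁2, hB₀2, hB₁2]
    try noncomm_ring
    try (rw [show (4 : ℤ) • (1 : H →L[ℂ] H) = 4 from by simp]; abel)
  -- C is self-adjoint
  have hCsa : IsSelfAdjoint C := by
    rw [hC]
    simp only [IsSelfAdjoint, star_sub, star_add, star_mul,
      hA₀.star_eq, hA₁.star_eq, hB₀.star_eq, hB₁.star_eq,
      ← hac, ← had, ← hbc, ← hbd]
  -- norm bound
  have hCC : ‖C‖ * ‖C‖ = ‖C * C‖ := by
    have := CStarRing.norm_star_mul_self (x := C)
    rw [hCsa.star_eq] at this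
    linarith
  have hcomm1 : ‖a * b - b * a‖ ≤ 2 := by
    calc ‖a * b - b * a‖ ≤ ‖a * b‖ + ‖b * a‖ := norm_sub_le _ _
    _ ≤ ‖a‖ * ‖b‖ + ‖b‖ * ‖a‖ := add_le_add (norm_mul_le _ _) (norm_mul_le _ _)
    _ = 2 := by rw [hna, hnb]; norm_num
  have hcomm2 : ‖d * c - c * d‖ ≤ 2 := by
    calc ‖d * c - c * d‖ ≤ ‖d * c‖ + ‖c * d‖ := norm_sub_le _ _
    _ ≤ ‖d‖ * ‖c‖ + ‖c‖ * ‖d‖ := add_le_add (norm_mul_le _ _) (norm_mul_le _ _)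
    _ = 2 := by rw [hnc, hnd]; norm_num
  have h4 : ‖(4 : H →L[ℂ] H)‖ ≤ 4 := by
    have : (4 : H →L[ℂ] H) = 1 + 1 + 1 + 1 := by norm_num
    rw [this]
    calc ‖(1 : H →L[ℂ] H) + 1 + 1 + 1‖ ≤ ‖(1 : H →L[ℂ] H) + 1 + 1‖ + ‖(1 : H →L[ℂ] H)‖ :=
          norm_add_le _ _
      _ ≤ (‖(1 : H →L[ℂ] H) + 1‖ + ‖(1 : H →L[ℂ] H)‖) + ‖(1 : H →L[ℂ] H)‖ :=
          by gcongr; exact norm_add_le _ _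
      _ ≤ ((‖(1 : H →L[ℂ] H)‖ + ‖(1 : H →L[ℂ] H)‖) + ‖(1 : H →L[ℂ] H)‖) + ‖(1 : H →L[ℂ] H)‖ :=
          by gcongr; exact norm_add_le _ _
      _ = 4 := by rw [norm_one]; norm_num
  have hC2 : ‖C‖ * ‖C‖ ≤ 8 := by
    rw [hCC, key]
    calc ‖(4 : H →L[ℂ] H) + (a * b - b * a) * (d * c - c * d)‖
        ≤ ‖(4 : H →L[ℂ] H)‖ + ‖(a * b - b * a) * (d * c - c * d)‖ := norm_add_le _ _
      _ ≤ 4 + ‖a * b - b * a‖ * ‖d * c - c * d‖ :=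
          add_le_add h4 (norm_mul_le _ _)
      _ ≤ 4 + 2 * 2 := by
          nlinarith [norm_nonneg (a * b - b * a), norm_nonneg (d * c - c * d)]
      _ = 8 := by norm_num
  have hCn : ‖C‖ ≤ 2 * Real.sqrt 2 := by
    nlinarith [Real.sq_sqrt (by norm_num : (2:ℝ) ≥ 0), norm_nonneg C,
      Real.sqrt_nonneg 2]
  calc |(inner ℂ ψ (C ψ) : ℂ).re| ≤ ‖(inner ℂ ψ (C ψ) : ℂ)‖ := Complex.abs_re_le_norm _
    _ ≤ ‖ψ‖ * ‖C ψ‖ := norm_inner_le_norm _ _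
    _ ≤ ‖ψ‖ * (‖C‖ * ‖ψ‖) := by gcongr; exact C.le_opNorm ψ
    _ = ‖C‖ := by rw [hψ]; ring
    _ ≤ 2 * Real.sqrt 2 := hCn
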